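/- Let E and F be real normed vector spaces, n ≥ 1, and let w_1, ..., w_n : E → ℝ be functions differentiable at a point x_0 ∈ E with w_i(x_0) ≥ 0 for all i and W := Σ_{i=1}^n w_i(x_0) > 0. Let y_1, ..., y_n ∈ F with ‖y_i‖ ≤ C. Then f(x) = (Σ_{i=1}^n w_i(x)·y_i)/(Σ_{i=1}^n w_i(x)) is differentiable at x_0 and the operator norm of its Fréchet derivative at x_0 satisfies ‖Df(x_0)‖ ≤ 2·C·(Σ_{i=1}^n ‖Dw_i(x_0)‖)/W. -/

import Mathlib

/-- Differential form of the gradient bound in the paper's Theorem 1: the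
weighted average of embeddings with nonnegative differentiable weights is
differentiable, with Fréchet derivative bounded in operator norm by
`2·C·(∑ ‖Dw i‖)/W`. -/
theorem weighted_average_fderiv_bound
    {E F : Type*} [NormedAddCommGroup E] [NormedSpace ℝ E]
    [NormedAddCommGroup F] [NormedSpace ℝ F]
    (n : ℕ) (hn : 1 ≤ n)
    (w : Fin n → E → ℝ) (x₀ : E)
    (hdiff : ∀ i, DifferentiableAt ℝ (w i) x₀)
    (hnonneg : ∀ i, 0 ≤ w i x₀)
    (W : ℝ) (hW : W = ∑ i, w i x₀) (hWpos : 0 < W)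
    (y : Fin n → F) (C : ℝ) (hy : ∀ i, ‖y i‖ ≤ C)
    (f : E → F) (hf : ∀ x, f x = (∑ i, w i x)⁻¹ • (∑ i, w i x • y i)) :
    DifferentiableAt ℝ f x₀ ∧
      ‖fderiv ℝ f x₀‖ ≤ 2 * C * (∑ i, ‖fderiv ℝ (w i) x₀‖) / W := by
  have hC : 0 ≤ C := le_trans (norm_nonneg (y ⟨0, hn⟩)) (hy ⟨0, hn⟩)
  set A : ℝ := ∑ i, ‖fderiv ℝ (w i) x₀‖ with hA
  have hAnn : 0 ≤ A := Finset.sum_nonneg fun i _ => norm_nonneg _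
  set S : E → ℝ := fun x => ∑ i, w i x with hSdef
  set T : E → F := fun x => ∑ i, w i x • y i with hTdef
  set S' : E →L[ℝ] ℝ := ∑ i, fderiv ℝ (w i) x₀ with hS'def
  set T' : E →L[ℝ] F := ∑ i, (fderiv ℝ (w i) x₀).smulRight (y i) with hT'def
  have hSx : S x₀ = W := hW.symm
  have hSne : S x₀ ≠ 0 := by rw [hSx]; exact ne_of_gt hWpos
  have hS : HasFDerivAt S S' x₀ :=
    HasFDerivAt.fun_sum fun i _ => (hdiff i).hasFDerivAt
  have hT : HasFDerivAt T T' x₀ :=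
    HasFDerivAt.fun_sum fun i _ => (hdiff i).hasFDerivAt.smul_const (y i)
  have hinv : HasFDerivAt (fun x => (S x)⁻¹)
      ((ContinuousLinearMap.smulRight (1 : ℝ →L[ℝ] ℝ) (-(S x₀ ^ 2)⁻¹)).comp S') x₀ :=
    (hasFDerivAt_inv hSne).comp x₀ hS
  have hfd : HasFDerivAt f
      ((S x₀)⁻¹ • T' +
        (((ContinuousLinearMap.smulRight (1 : ℝ →L[ℝ] ℝ) (-(S x₀ ^ 2)⁻¹)).comp S')).smulRight
          (T x₀)) x₀ := by
    have : f = fun x => (S x)⁻¹ • T x := funext hf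
    rw [this]
    exact hinv.smul hT
  refine ⟨hfd.differentiableAt, ?_⟩
  rw [hfd.fderiv]
  have hS'norm : ‖S'‖ ≤ A := (norm_sum_le _ _)
  have hT'bound : ∀ v : E, ‖T' v‖ ≤ C * A * ‖v‖ := by
    intro v
    calc ‖T' v‖ ≤ ∑ i, ‖(fderiv ℝ (w i) x₀ v) • y i‖ := by
          rw [hT'def]
          simpa using norm_sum_le Finset.univ fun i => (fderiv ℝ (w i) x₀ v) • y i
      _ ≤ ∑ i, ‖fderiv ℝ (w i) x₀‖ * ‖v‖ * C := by
          refine Finset.sum_le_sum fun i _ => ?_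
          rw [norm_smul]
          exact mul_le_mul ((fderiv ℝ (w i) x₀).le_opNorm v) (hy i) (norm_nonneg _)
            (by positivity)
      _ = C * A * ‖v‖ := by rw [hA, ← Finset.sum_mul, ← Finset.sum_mul]; ring
  have hTx : ‖T x₀‖ ≤ W * C := by
    calc ‖T x₀‖ ≤ ∑ i, ‖w i x₀ • y i‖ := norm_sum_le _ _
      _ ≤ ∑ i, w i x₀ * C := by
          refine Finset.sum_le_sum fun i _ => ?_
          rw [norm_smul, Real.norm_eq_abs, abs_of_nonneg (hnonneg i)]
          exact mul_le_mul_of_nonneg_left (hy i) (hnonneg i)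
      _ = W * C := by rw [hW, Finset.sum_mul]
  refine ContinuousLinearMap.opNorm_le_bound _ (by positivity) fun v => ?_
  have h1 : ‖(S x₀)⁻¹ • T' v‖ ≤ W⁻¹ * (C * A * ‖v‖) := by
    rw [norm_smul, hSx, Real.norm_eq_abs, abs_of_nonneg (inv_nonneg.2 hWpos.le)]
    exact mul_le_mul_of_nonneg_left (hT'bound v) (inv_nonneg.2 hWpos.le)
  have hS'v : |S' v| ≤ A * ‖v‖ :=
    le_trans (S'.le_opNorm v) (mul_le_mul_of_nonneg_right hS'norm (norm_nonneg v))
  have h2 : ‖((-(S x₀ ^ 2)⁻¹) * S' v) • T x₀‖ ≤ (W ^ 2)⁻¹ * (A * ‖v‖) * (W * C) := by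
    rw [norm_smul, Real.norm_eq_abs, abs_mul, abs_neg, abs_inv, abs_pow,
      hSx, abs_of_nonneg hWpos.le]
    have : |S' v| * ‖T x₀‖ ≤ (A * ‖v‖) * (W * C) :=
      mul_le_mul hS'v hTx (norm_nonneg _) (by positivity)
    calc (W ^ 2)⁻¹ * |S' v| * ‖T x₀‖ = (W ^ 2)⁻¹ * (|S' v| * ‖T x₀‖) := by ring
      _ ≤ (W ^ 2)⁻¹ * ((A * ‖v‖) * (W * C)) := by
          exact mul_le_mul_of_nonneg_left this (by positivity)
      _ = (W ^ 2)⁻¹ * (A * ‖v‖) * (W * C) := by ring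
  calc ‖((S x₀)⁻¹ • T' +
        (((ContinuousLinearMap.smulRight (1 : ℝ →L[ℝ] ℝ) (-(S x₀ ^ 2)⁻¹)).comp S')).smulRight
          (T x₀)) v‖
      = ‖(S x₀)⁻¹ • T' v + ((-(S x₀ ^ 2)⁻¹) * S' v) • T x₀‖ := by
        simp [ContinuousLinearMap.smulRight_apply, mul_comm, smul_smul]
    _ ≤ ‖(S x₀)⁻¹ • T' v‖ + ‖((-(S x₀ ^ 2)⁻¹) * S' v) • T x₀‖ := norm_add_le _ _
    _ ≤ W⁻¹ * (C * A * ‖v‖) + (W ^ 2)⁻¹ * (A * ‖v‖) * (W * C) := add_le_add h1 h2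
    _ = 2 * C * A / W * ‖v‖ := by field_simp; ring
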